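/- Define f₋(β) := −β + ((1−α/2)/Γ(2-α)) ∫₀^{η₂(β)} ( 1 + (m+1)(−βz − (α²/Γ(2-α)) z²/8) )^{1/(1+m)} dz. Then f₋(0) > 0 and lim_{β→∞} f₋(β) = −∞. -/

import Mathlib

open Real Filter

/-- The root η₂(β). -/
noncomputable def eta2 (α m β : ℝ) : ℝ :=
  2 * Real.sqrt 2 *
      Real.sqrt (Real.Gamma (2 - α) * (α ^ 2 + 2 * β ^ 2 * (m + 1) * Real.Gamma (2 - α))) /
    (α ^ 2 * Real.sqrt (m + 1)) - 4 * β * Real.Gamma (2 - α) / α ^ 2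

/-- The lower flux bound f₋. -/
noncomputable def fminus (α m β : ℝ) : ℝ :=
  -β + (1 - α / 2) / Real.Gamma (2 - α) *
    ∫ z in (0:ℝ)..eta2 α m β,
      (1 + (m + 1) * (-(β * z) - α ^ 2 / Real.Gamma (2 - α) * z ^ 2 / 8)) ^ (1 / (1 + m))

lemma eta2_key (α m β : ℝ) (hα : 0 < α) (hα1 : α < 1) (hm : 1 < m) :
    0 < eta2 α m β ∧
      (m+1)*β*(eta2 α m β)*(8*Real.Gamma (2-α)) + (m+1)*α^2*(eta2 α m β)^2
        = 8*Real.Gamma (2-α) := by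
  have hG : 0 < Real.Gamma (2-α) := Real.Gamma_pos_of_pos (by linarith)
  set G := Real.Gamma (2-α) with hGdef
  have hm1 : (0:ℝ) < m + 1 := by linarith
  set s := Real.sqrt (G*(α^2+2*β^2*(m+1)*G)) with hs
  have hs0 : 0 ≤ s := Real.sqrt_nonneg _
  have hs2 : s^2 = G*(α^2+2*β^2*(m+1)*G) := Real.sq_sqrt (by positivity)
  set t := Real.sqrt (m+1) with ht
  have ht0 : 0 < t := Real.sqrt_pos.mpr hm1
  have ht2 : t^2 = m+1 := Real.sq_sqrt hm1.le
  set r := Real.sqrt 2 with hr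
  have hr0 : 0 < r := Real.sqrt_pos.mpr (by norm_num)
  have hr2 : r^2 = 2 := Real.sq_sqrt (by norm_num)
  have hα2 : (0:ℝ) < α^2 := by positivity
  have heta : eta2 α m β = (2*r*s - 4*β*G*t)/(α^2*t) := by
    rw [eta2, ← hGdef, ← hr, ← ht, ← hs]
    rw [div_sub_div _ _ (by positivity) (by positivity)]
    rw [div_eq_div_iff (by positivity) (by positivity)]
    ring
  constructor
  · rw [heta]
    apply div_pos _ (by positivity)
    have hrs : (r*s)^2 = 2*(G*(α^2+2*β^2*(m+1)*G)) := by rw [mul_pow, hr2, hs2]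
    have h2 : 4*β*G*t < 2*r*s := by
      apply lt_of_pow_lt_pow_left₀ 2 (by positivity)
      nlinarith [hrs, ht2, mul_pos hG hα2]
    linarith
  · have hkey : 8*G*β*t*(2*r*s - 4*β*G*t) + (2*r*s - 4*β*G*t)^2 = 8*G*α^2 := by
      linear_combination (4*s^2) * hr2 + 8 * hs2 - 16*β^2*G^2 * ht2
    rw [heta]
    have hGne : G ≠ 0 := ne_of_gt hG
    have hαne : α ≠ 0 := ne_of_gt hα
    have htne : t ≠ 0 := ne_of_gt ht0
    field_simp
    linear_combination (m+1) * hkey - 8*G*α^2 * ht2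

/-- f₋(0) > 0 and f₋(β) → -∞ as β → ∞. -/
theorem fminus_props (α m : ℝ) (hα : 0 < α) (hα1 : α < 1) (hm : 1 < m) :
    0 < fminus α m 0 ∧ Tendsto (fun β => fminus α m β) atTop atBot := by
  have hG : 0 < Real.Gamma (2-α) := Real.Gamma_pos_of_pos (by linarith)
  have hm1 : (0:ℝ) < m + 1 := by linarith
  have hq : (0:ℝ) < 1/(1+m) := by positivity
  have hC : 0 < (1 - α/2)/Real.Gamma (2-α) := div_pos (by linarith) hG
  have hbase_eq : ∀ β x : ℝ,
      1 + (m + 1) * (-(β * x) - α ^ 2 / Real.Gamma (2 - α) * x ^ 2 / 8)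
        = (8*Real.Gamma (2-α) - (m+1)*β*x*(8*Real.Gamma (2-α)) - (m+1)*α^2*x^2)
            /(8*Real.Gamma (2-α)) := by
    intro β x
    field_simp
    ring
  have hcont : ∀ β : ℝ, Continuous (fun z : ℝ =>
      (1 + (m + 1) * (-(β * z) - α ^ 2 / Real.Gamma (2 - α) * z ^ 2 / 8)) ^ (1 / (1 + m))) := by
    intro β
    rw [continuous_iff_continuousAt]
    intro x
    exact ContinuousAt.rpow_const (by fun_prop) (Or.inr hq.le)
  have hint : ∀ β : ℝ, IntervalIntegrable (fun z : ℝ =>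
      (1 + (m + 1) * (-(β * z) - α ^ 2 / Real.Gamma (2 - α) * z ^ 2 / 8)) ^ (1 / (1 + m)))
      MeasureTheory.volume 0 (eta2 α m β) :=
    fun β => (hcont β).intervalIntegrable _ _
  constructor
  · obtain ⟨hη, hroot⟩ := eta2_key α m 0 hα hα1 hm
    have hpos : 0 < ∫ z in (0:ℝ)..eta2 α m 0,
        (1 + (m + 1) * (-((0:ℝ) * z) - α ^ 2 / Real.Gamma (2 - α) * z ^ 2 / 8)) ^ (1 / (1 + m)) := by
      apply intervalIntegral.intervalIntegral_pos_of_pos_on (hint 0) _ hη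
      intro x hx
      apply Real.rpow_pos_of_pos
      rw [hbase_eq]
      apply div_pos _ (by positivity)
      nlinarith [hroot, hx.1, hx.2, sq_nonneg x, mul_pos hm1 (mul_pos (mul_pos hα hα) (mul_pos (sub_pos.mpr hx.2) (by linarith [hx.1, hx.2] : (0:ℝ) < eta2 α m 0 + x)))]
    rw [fminus]
    have := mul_pos hC hpos
    linarith
  · set K := Real.sqrt (8*Real.Gamma (2-α)/((m+1)*α^2)) with hK
    have hbound : ∀ β : ℝ, 0 ≤ β →
        fminus α m β ≤ -β + (1 - α/2)/Real.Gamma (2-α) * K := by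
      intro β hβ
      obtain ⟨hη, hroot⟩ := eta2_key α m β hα hα1 hm
      have hbase0 : ∀ x ∈ Set.Icc (0:ℝ) (eta2 α m β),
          0 ≤ 1 + (m + 1) * (-(β * x) - α ^ 2 / Real.Gamma (2 - α) * x ^ 2 / 8) := by
        intro x hx
        rw [hbase_eq]
        apply div_nonneg _ (by positivity)
        nlinarith [hroot, hx.1, hx.2, mul_nonneg (mul_nonneg hβ hx.1) hG.le,
          mul_nonneg (mul_nonneg hm1.le hβ) (sub_nonneg.mpr hx.2),
          mul_nonneg (mul_nonneg hm1.le (mul_nonneg hα.le hα.le))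
            (mul_nonneg (sub_nonneg.mpr hx.2) (by linarith [hx.1, hx.2] : (0:ℝ) ≤ eta2 α m β + x))]
      have hle : (∫ z in (0:ℝ)..eta2 α m β,
          (1 + (m + 1) * (-(β * z) - α ^ 2 / Real.Gamma (2 - α) * z ^ 2 / 8)) ^ (1 / (1 + m)))
            ≤ eta2 α m β := by
        have h1 : (∫ z in (0:ℝ)..eta2 α m β,
            (1 + (m + 1) * (-(β * z) - α ^ 2 / Real.Gamma (2 - α) * z ^ 2 / 8)) ^ (1 / (1 + m)))
              ≤ ∫ _z in (0:ℝ)..eta2 α m β, (1:ℝ) := by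
          apply intervalIntegral.integral_mono_on hη.le (hint β) intervalIntegrable_const
          intro x hx
          apply Real.rpow_le_one (hbase0 x hx) _ hq.le
          have hx1 := hx.1
          have hx2 := hx.2
          have hxG : 0 ≤ α ^ 2 / Real.Gamma (2 - α) * x ^ 2 / 8 := by positivity
          nlinarith [mul_nonneg hβ hx1]
        simpa using h1
      have hηK : eta2 α m β ≤ K := by
        rw [hK]
        apply Real.le_sqrt_of_sq_le
        rw [le_div_iff₀ (by positivity)]
        nlinarith [hroot, mul_nonneg (mul_nonneg (mul_nonneg hm1.le hβ) hη.le) hG.le]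
      calc fminus α m β ≤ -β + (1 - α/2)/Real.Gamma (2-α) * eta2 α m β := by
            rw [fminus]
            have := mul_le_mul_of_nonneg_left hle hC.le
            linarith
        _ ≤ -β + (1 - α/2)/Real.Gamma (2-α) * K := by
            have := mul_le_mul_of_nonneg_left hηK hC.le
            linarith
    have hg : Tendsto (fun β : ℝ => -β + (1 - α/2)/Real.Gamma (2-α) * K) atTop atBot := by
      apply tendsto_atBot_add_const_right
      exact tendsto_neg_atTop_atBot
    apply tendsto_atBot_mono' atTop _ hg
    filter_upwards [eventually_ge_atTop (0:ℝ)] with β hβ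
    exact hbound β hβ
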